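/- arXiv:1910.00769 — 2 statements merged into one kernel-verified Lean document; each statement's English description precedes it below -/
import Mathlib

section
/- Let R be a small preadditive category and 𝒱 an FI-module over R. Define H_0(𝒱)(S) as the cokernel of the map ⊕_{φ: T ↪ S, |T| < |S|} 𝒱(T) → 𝒱(S). Then 𝒱 = 0 if and only if H_0(𝒱) = 0; moreover a morphism f in FI_R is an epimorphism if and only if H_0(f) is an epimorphism. -/
open CategoryTheory CategoryTheory.Limits Opposite

/-- The category `FI` of finite sets and injections. -/
structure FI : Type 1 where
  carrier : Type
  [fin : Fintype carrier]

attribute [instance] FI.fin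

instance : CoeSort FI Type := ⟨FI.carrier⟩

instance : Category FI where
  Hom S T := {f : S.carrier → T.carrier // Function.Injective f}
  id S := ⟨id, fun _ _ h => h⟩
  comp f g := ⟨g.1 ∘ f.1, g.2.comp f.2⟩

@[ext] lemma FI.hom_ext {S T : FI} (f g : S ⟶ T) (h : f.1 = g.1) : f = g := Subtype.ext h

@[simp] lemma FI.comp_val {S T U : FI} (f : S ⟶ T) (g : T ⟶ U) : (f ≫ g).1 = g.1 ∘ f.1 := rfl
@[simp] lemma FI.id_val (S : FI) : (𝟙 S : S ⟶ S).1 = id := rfl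

/-- The finite set `[n] = {1, …, n}` as an object of `FI`. -/
def FI.of (n : ℕ) : FI := ⟨Fin n⟩

/-- The category of right modules over a small preadditive category `R`
("ring with several objects"): `AddCommGrp`-valued presheaves on `R`. -/
abbrev ModR (R : Type) [SmallCategory R] [Preadditive R] := Rᵒᵖ ⥤ AddCommGrpCat.{0}

/-- The category `FI_R` of `FI`-modules over `R`. -/
abbrev FIMod (R : Type) [SmallCategory R] [Preadditive R] := FI ⥤ ModR R

variable (R : Type) [SmallCategory R] [Preadditive R]

/-- The free `FI`-module `_dM_r` over `R`: it sends a finite set `S` to the direct sum of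
copies of the representable right `R`-module `H_r = R(-, r)`, indexed by the set of
injections `[d] ↪ S`. -/
noncomputable def genM (d : ℕ) (r : R) : FIMod R where
  obj S := ∐ fun _ : FI.of d ⟶ S => preadditiveYoneda.obj r
  map {S T} ψ := Sigma.desc fun φ =>
    Sigma.ι (fun _ : FI.of d ⟶ T => preadditiveYoneda.obj r) (φ ≫ ψ)
  map_id S := by
    ext φ
    simp
  map_comp {S T U} ψ χ := by
    ext φ
    simp

/-- The value `𝒱(d)(r)` of an `FI`-module at `[d]` and `r ∈ R`, as an abelian group. -/
abbrev FIModVal (𝒱 : FIMod R) (d : ℕ) (r : R) : AddCommGrpCat.{0} :=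
  (𝒱.obj (FI.of d)).obj (op r)

/-- Index for the collection of injections `φ : T ↪ S` with `|T| < |S|` (up to the skeleton
`[m]`, `m < |S|`, of the category of such `T`). -/
def belowIdx (S : FI) : Type := Σ m : Fin (Fintype.card S.carrier), (FI.of m ⟶ S)

/-- The canonical map `⊕_{φ : T ↪ S, |T| < |S|} 𝒱(T) ⟶ 𝒱(S)`. -/
noncomputable def belowMap (𝒱 : FIMod R) (S : FI) :
    (∐ fun p : belowIdx S => 𝒱.obj (FI.of p.1)) ⟶ 𝒱.obj S :=
  Sigma.desc fun p => 𝒱.map p.2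

lemma comp_cokernelπ_belowMap (𝒱 : FIMod R) {T : FI} {m : ℕ}
    (hm : m < Fintype.card T.carrier) (f : FI.of m ⟶ T) :
    𝒱.map f ≫ cokernel.π (belowMap R 𝒱 T) = 0 := by
  have h : 𝒱.map f
      = Sigma.ι (fun p : belowIdx T => 𝒱.obj (FI.of p.1)) ⟨⟨m, hm⟩, f⟩ ≫ belowMap R 𝒱 T := by
    simp [belowMap]
  rw [h, Category.assoc, cokernel.condition, comp_zero]

lemma card_le_of_hom {S T : FI} (f : S ⟶ T) :
    Fintype.card S.carrier ≤ Fintype.card T.carrier :=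
  Fintype.card_le_of_injective f.1 f.2

@[simp] lemma ι_belowMap (𝒱 : FIMod R) (S : FI) (p : belowIdx S) :
    Sigma.ι (fun q : belowIdx S => 𝒱.obj (FI.of q.1)) p ≫ belowMap R 𝒱 S = 𝒱.map p.2 :=
  Sigma.ι_desc _ _

lemma belowMap_comp_π (𝒱 : FIMod R) {S T : FI} (ψ : S ⟶ T) :
    belowMap R 𝒱 S ≫ 𝒱.map ψ ≫ cokernel.π (belowMap R 𝒱 T) = 0 := by
  apply Sigma.hom_ext
  intro p
  rw [comp_zero, ← Category.assoc, ι_belowMap, ← Functor.map_comp_assoc]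
  exact comp_cokernelπ_belowMap R 𝒱 (lt_of_lt_of_le p.1.2 (card_le_of_hom ψ)) (p.2 ≫ ψ)

lemma belowMap_comp_app_π (𝒱 𝒲 : FIMod R) (f : 𝒱 ⟶ 𝒲) (S : FI) :
    belowMap R 𝒱 S ≫ f.app S ≫ cokernel.π (belowMap R 𝒲 S) = 0 := by
  apply Sigma.hom_ext
  intro p
  rw [comp_zero, ← Category.assoc, ι_belowMap, ← Category.assoc, f.naturality, Category.assoc,
    comp_cokernelπ_belowMap R 𝒲 p.1.2 p.2, comp_zero]

/-- The `FI`-module `H₀(𝒱)`, sending `S` to `coker (⊕_{φ : T ↪ S, |T| < |S|} 𝒱(T) → 𝒱(S))`. -/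
noncomputable def H0obj (𝒱 : FIMod R) : FIMod R where
  obj S := cokernel (belowMap R 𝒱 S)
  map {S T} ψ := cokernel.desc _ (𝒱.map ψ ≫ cokernel.π (belowMap R 𝒱 T))
    (belowMap_comp_π R 𝒱 ψ)
  map_id S := by
    apply coequalizer.hom_ext
    simp
  map_comp {S T U} ψ χ := by
    apply coequalizer.hom_ext
    simp

/-- The functor `H₀ : FI_R ⥤ FI_R`. -/
noncomputable def H0 : FIMod R ⥤ FIMod R where
  obj 𝒱 := H0obj R 𝒱
  map {𝒱 𝒲} f :=
  { app := fun S => cokernel.desc _ (f.app S ≫ cokernel.π (belowMap R 𝒲 S))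
      (belowMap_comp_app_π R 𝒱 𝒲 f S)
    naturality := fun S T ψ => by
      apply coequalizer.hom_ext
      simp only [H0obj, cokernel.π_desc_assoc, cokernel.π_desc, Category.assoc]
      rw [← Category.assoc, f.naturality, Category.assoc]
  }
  map_id 𝒱 := by
    apply NatTrans.ext
    funext S
    apply coequalizer.hom_ext
    simp [H0obj]
  map_comp {𝒱 𝒲 𝒳} f g := by
    apply NatTrans.ext
    funext S
    apply coequalizer.hom_ext
    simp [H0obj]

/-- The shift functor `S ↦ S ⊔ [-a]` on `FI`, where `[-a]` is a fixed `a`-element set. -/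
def FI.shift (a : ℕ) : FI ⥤ FI where
  obj S := ⟨S.carrier ⊕ Fin a⟩
  map f := ⟨Sum.map f.1 id, f.2.sumMap (fun _ _ h => h)⟩
  map_id S := by
    apply FI.hom_ext
    funext x
    cases x <;> rfl
  map_comp f g := by
    apply FI.hom_ext
    funext x
    cases x <;> rfl

/-- The positive shift functor `𝕊^a` on `FI`-modules, `(𝕊^a 𝒱)(S) = 𝒱(S ⊔ [-a])`. -/
def shiftFun (a : ℕ) : FIMod R ⥤ FIMod R :=
  (Functor.whiskeringLeft FI FI (ModR R)).obj (FI.shift a)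

/-- The inclusion `S ↪ S ⊔ [-a]` as a natural transformation `𝟭 FI ⟶ FI.shift a`. -/
def FI.shiftIncl (a : ℕ) : 𝟭 FI ⟶ FI.shift a where
  app S := ⟨Sum.inl, fun _ _ h => Sum.inl_injective h⟩
  naturality S T f := by
    apply FI.hom_ext
    funext x
    rfl

/-- The canonical morphism `ψ_a : 𝒱 ⟶ 𝕊^a 𝒱` induced by the inclusions `S ↪ S ⊔ [-a]`. -/
def shiftIncl (a : ℕ) (𝒱 : FIMod R) : 𝒱 ⟶ (shiftFun R a).obj 𝒱 :=
  𝒱.leftUnitor.inv ≫ Functor.whiskerRight (FI.shiftIncl a) 𝒱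

/-- Finitely generated object of a category: `Hom(X, -)` preserves filtered colimits of
monomorphisms, expressed via the factorization property. -/
def IsFGObj {A : Type*} [Category A] (X : A) : Prop :=
  ∀ (J : Type) [SmallCategory J] [IsFiltered J] (D : J ⥤ A),
    (∀ ⦃j j' : J⦄ (f : j ⟶ j'), Mono (D.map f)) →
    ∀ (c : Cocone D), IsColimit c →
    ∀ (g : X ⟶ c.pt), ∃ (j : J) (g' : X ⟶ D.obj j), g' ≫ c.ι.app j = g

/-- An `FI`-module `𝒱` is generated in degree `≤ d` if it admits an epimorphism from a
coproduct of free modules `_{d_i}M_{r_i}` with all `d_i ≤ d`. -/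
def GenInDeg (d : ℕ) (𝒱 : FIMod R) : Prop :=
  ∃ (ι : Type) (ds : ι → ℕ) (rs : ι → R), (∀ i, ds i ≤ d) ∧
    ∃ e : (∐ fun i : ι => genM R (ds i) (rs i)) ⟶ 𝒱, Epi e

@[simp] lemma card_FI_of (m : ℕ) : Fintype.card (FI.of m).carrier = m := by
  simp [FI.of]
  exact Fintype.card_fin m

lemma aux_zero (𝒱 : FIMod R) (h : ∀ S : FI, IsZero (cokernel (belowMap R 𝒱 S))) :
    ∀ (n : ℕ) (S : FI), Fintype.card S.carrier = n → IsZero (𝒱.obj S) := by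
  intro n
  induction n using Nat.strong_induction_on with
  | _ n ih =>
    intro S hS
    have hb : belowMap R 𝒱 S = 0 := by
      apply Sigma.hom_ext
      intro p
      rw [ι_belowMap, comp_zero]
      exact (ih p.1 (hS ▸ p.1.2) (FI.of p.1) (card_FI_of p.1)).eq_of_src _ _
    exact (h S).of_iso (cokernelZeroIsoTarget.symm ≪≫ (cokernelIsoOfEq hb).symm)

lemma aux_epi (𝒱 𝒲 : FIMod R) (f : 𝒱 ⟶ 𝒲)
    (h : ∀ S : FI, Epi (((H0 R).map f).app S)) :
    ∀ (n : ℕ) (S : FI), Fintype.card S.carrier = n → Epi (f.app S) := by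
  intro n
  induction n using Nat.strong_induction_on with
  | _ n ih =>
    intro S hS
    -- the coproduct of the maps `f.app (FI.of m)`, `m < |S|`, is epi by induction
    have hepi : ∀ p : belowIdx S, Epi (f.app (FI.of p.1)) := fun p =>
      ih p.1 (hS ▸ p.1.2) (FI.of p.1) (card_FI_of p.1)
    haveI : ∀ p : belowIdx S, Epi (f.app (FI.of p.1)) := hepi
    haveI hΦ := Limits.Sigma.map_epi (fun p : belowIdx S => f.app (FI.of p.1))
    have hcomm : (Limits.Sigma.map fun p : belowIdx S => f.app (FI.of p.1)) ≫ belowMap R 𝒲 S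
        = belowMap R 𝒱 S ≫ f.app S := by
      apply Sigma.hom_ext
      intro p
      simp only [Sigma.ι_map_assoc, ι_belowMap]
      rw [← Category.assoc, ι_belowMap]
      exact (f.naturality p.2).symm
    apply Abelian.epi_of_cokernel_π_eq_zero
    set c := cokernel.π (f.app S) with hc
    have h1 : belowMap R 𝒲 S ≫ c = 0 := by
      rw [← cancel_epi (Limits.Sigma.map fun p : belowIdx S => f.app (FI.of p.1)),
        ← Category.assoc, hcomm, Category.assoc, cokernel.condition, comp_zero, comp_zero]
    set q' := cokernel.desc (belowMap R 𝒲 S) c h1 with hq'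
    have h2 : cokernel.π (belowMap R 𝒲 S) ≫ q' = c := cokernel.π_desc _ _ _
    have h3 : ((H0 R).map f).app S ≫ q' = 0 := by
      apply (cancel_epi (cokernel.π (belowMap R 𝒱 S))).1
      have h4 : cokernel.π (belowMap R 𝒱 S) ≫ ((H0 R).map f).app S
          = f.app S ≫ cokernel.π (belowMap R 𝒲 S) := by
        exact cokernel.π_desc _ _ _
      erw [← Category.assoc, h4, Category.assoc, h2, cokernel.condition, comp_zero]
    have h5 : q' = 0 := by
      haveI := h S
      apply (cancel_epi (((H0 R).map f).app S)).1
      rw [h3]; exact comp_zero.symm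
    rw [← h2, h5, comp_zero]

/-- For an `FI`-module `𝒱` over `R`, one has `𝒱 = 0` iff `H₀(𝒱) = 0`;
moreover a morphism `f` in `FI_R` is an epimorphism iff `H₀(f)` is an epimorphism. -/
theorem statement8 :
    (∀ 𝒱 : FIMod R, IsZero 𝒱 ↔ IsZero ((H0 R).obj 𝒱)) ∧
    (∀ (𝒱 𝒲 : FIMod R) (f : 𝒱 ⟶ 𝒲), Epi f ↔ Epi ((H0 R).map f)) := by
  constructor
  · intro 𝒱
    constructor
    · intro h
      apply Functor.isZero
      intro S
      exact (IsZero.of_epi (cokernel.π (belowMap R 𝒱 S)) (h.obj S) : IsZero (cokernel (belowMap R 𝒱 S)))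
    · intro h
      apply Functor.isZero
      intro S
      exact aux_zero R 𝒱 (fun S => h.obj S) _ S rfl
  · intro 𝒱 𝒲 f
    constructor
    · intro hf
      rw [NatTrans.epi_iff_epi_app]
      intro S
      haveI : Epi (f.app S) := inferInstance
      haveI : Epi (f.app S ≫ cokernel.π (belowMap R 𝒲 S)) := epi_comp _ _
      have h4 : cokernel.π (belowMap R 𝒱 S) ≫ ((H0 R).map f).app S
          = f.app S ≫ cokernel.π (belowMap R 𝒲 S) := by
        exact cokernel.π_desc _ _ _
      haveI : Epi (cokernel.π (belowMap R 𝒱 S) ≫ ((H0 R).map f).app S) := by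
        rw [h4]; exact this
      exact epi_of_epi (cokernel.π (belowMap R 𝒱 S)) _
    · intro hf
      rw [NatTrans.epi_iff_epi_app]
      intro S
      exact aux_epi R 𝒱 𝒲 f (fun S => inferInstance) _ S rfl
end

section
/- Let Mod-R be locally noetherian and (T,F) a hereditary torsion theory on Mod-R. An FI-module 𝓛 over R is closed with respect to the Serre subcategory T̂^0 = {𝒱 ∈ FI_R : 𝒱_n ∈ T for all n ≥ 0} if and only if 𝓛(S) is a T-closed object of Mod-R for every finite set S. -/
open CategoryTheory CategoryTheory.Limits Opposite

variable (R : Type) [SmallCategory R] [Preadditive R]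

/-- A morphism `u` is a `C`-isomorphism if both its kernel and cokernel satisfy `C`. -/
def IsCIso {A : Type*} [Category A] [Abelian A] (C : A → Prop) {X Y : A} (u : X ⟶ Y) : Prop :=
  C (kernel u) ∧ C (cokernel u)

/-- An object `L` is `C`-closed if precomposition with any `C`-isomorphism `u` induces a
bijection `Hom(B, L) → Hom(A, L)`. -/
def IsCClosed {A : Type*} [Category A] [Abelian A] (C : A → Prop) (L : A) : Prop :=
  ∀ ⦃X Y : A⦄ (u : X ⟶ Y), IsCIso C u → Function.Bijective (fun g : Y ⟶ L => u ≫ g)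

/-! ### Auxiliary machinery for Statement 18 -/

attribute [local instance] CategoryTheory.Abelian.hasFiniteBiproducts


noncomputable instance FI.homFintype (S T : FI) : Fintype (S ⟶ T) := by
  classical
  exact Fintype.ofInjective (fun f : S ⟶ T => f.1) (fun f g h => Subtype.ext h)

/-- The canonical isomorphism `[card S] ≅ S` in `FI`. -/
noncomputable def FI.isoOf (S : FI) : FI.of (Fintype.card S.carrier) ≅ S :=
  let e := (Fintype.equivFin S.carrier).symm
  { hom := ⟨e, e.injective⟩
    inv := ⟨e.symm, e.symm.injective⟩
    hom_inv_id := by apply FI.hom_ext; funext x; exact e.symm_apply_apply x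
    inv_hom_id := by apply FI.hom_ext; funext x; exact e.apply_symm_apply x }

section TorsionLemmas

variable {T F : ModR R → Prop}
variable (hhom : ∀ (X Y : ModR R), T X → F Y → ∀ f : X ⟶ Y, f = 0)
variable (hses : ∀ X : ModR R, ∃ s : Subobject X, T (s : ModR R) ∧ F (cokernel s.arrow))
variable (hhered : ∀ {X Y : ModR R} (f : X ⟶ Y), Mono f → T Y → T X)

include hhered in
lemma T_of_iso {A B : ModR R} (e : A ≅ B) (hA : T A) : T B :=
  hhered e.inv inferInstance hA

include hhom hses hhered in
lemma T_of_epi {A B : ModR R} (e : A ⟶ B) (he : Epi e) (hA : T A) : T B := by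
  obtain ⟨s, hs, hF⟩ := hses B
  have h0 : cokernel.π s.arrow = 0 := by
    refine he.left_cancellation _ _ ?_
    rw [comp_zero]
    exact hhom A (cokernel s.arrow) hA hF _
  have he' : Epi s.arrow := CategoryTheory.Abelian.epi_of_cokernel_π_eq_zero _ h0
  have : IsIso s.arrow := isIso_of_mono_of_epi _
  exact T_of_iso R hhered (asIso s.arrow) hs

include hhom hses hhered in
lemma T_biproduct {ι : Type} [Fintype ι] (Z : ι → ModR R) (hZ : ∀ i, T (Z i)) :
    T (⨁ Z) := by
  obtain ⟨s, hs, hF⟩ := hses (⨁ Z)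
  have h0 : cokernel.π s.arrow = 0 := by
    apply biproduct.hom_ext'
    intro i
    rw [comp_zero]
    exact hhom (Z i) _ (hZ i) hF _
  have he' : Epi s.arrow := CategoryTheory.Abelian.epi_of_cokernel_π_eq_zero _ h0
  have : IsIso s.arrow := isIso_of_mono_of_epi _
  exact T_of_iso R hhered (asIso s.arrow) hs

include hhom hses hhered in
lemma T_ker_biproductMap {X Y : ModR R} (u : X ⟶ Y) (hk : T (kernel u))
    (ι : Type) [Fintype ι] :
    T (kernel (biproduct.map (fun _ : ι => u))) := by
  set f := biproduct.map (fun _ : ι => u) with hf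
  have hcomp : ∀ i : ι, (kernel.ι f ≫ biproduct.π (fun _ : ι => X) i) ≫ u = 0 := by
    intro i
    rw [Category.assoc, ← biproduct.map_π (fun _ : ι => u) i, ← hf,
      kernel.condition_assoc, zero_comp]
  set θ : kernel f ⟶ ⨁ (fun _ : ι => kernel u) :=
    biproduct.lift (fun i => kernel.lift u (kernel.ι f ≫ biproduct.π _ i) (hcomp i)) with hθdef
  have hθ : θ ≫ biproduct.map (fun _ : ι => kernel.ι u) = kernel.ι f := by
    apply biproduct.hom_ext
    intro i
    rw [Category.assoc, biproduct.map_π, hθdef, biproduct.lift_π_assoc, kernel.lift_ι]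
  have : Mono (θ ≫ biproduct.map (fun _ : ι => kernel.ι u)) := by
    rw [hθ]; infer_instance
  have hm : Mono θ := mono_of_mono θ (biproduct.map (fun _ : ι => kernel.ι u))
  exact hhered θ hm (T_biproduct R hhom hses hhered _ (fun _ => hk))

include hhom hses hhered in
lemma T_coker_biproductMap {X Y : ModR R} (u : X ⟶ Y) (hc : T (cokernel u))
    (ι : Type) [Fintype ι] :
    T (cokernel (biproduct.map (fun _ : ι => u))) := by
  set f := biproduct.map (fun _ : ι => u) with hf
  have hcomp : ∀ i : ι, u ≫ biproduct.ι (fun _ : ι => Y) i ≫ cokernel.π f = 0 := by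
    intro i
    rw [← Category.assoc, ← biproduct.ι_map (fun _ : ι => u) i, ← hf, Category.assoc,
      cokernel.condition, comp_zero]
  set φ : (⨁ (fun _ : ι => cokernel u)) ⟶ cokernel f :=
    biproduct.desc (fun i => cokernel.desc u (biproduct.ι (fun _ : ι => Y) i ≫ cokernel.π f) (hcomp i))
    with hφdef
  have hφ : biproduct.map (fun _ : ι => cokernel.π u) ≫ φ = cokernel.π f := by
    apply biproduct.hom_ext'
    intro i
    rw [biproduct.ι_map_assoc, hφdef, biproduct.ι_desc, cokernel.π_desc]
  have : Epi (biproduct.map (fun _ : ι => cokernel.π u) ≫ φ) := by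
    rw [hφ]; infer_instance
  have he : Epi φ := epi_of_epi (biproduct.map (fun _ : ι => cokernel.π u)) φ
  exact T_of_epi R hhom hses hhered φ he (T_biproduct R hhom hses hhered _ (fun _ => hc))

end TorsionLemmas

/-! ### The copower FI-module `S ↦ (U ↦ ⨁_{φ : S ↪ U} X)` -/

/-- The "copower" FI-module on `X : ModR R` coinduced from a finite set `S`. -/
noncomputable def copow (X : ModR R) (S : FI) : FIMod R where
  obj U := ⨁ fun _ : S ⟶ U => X
  map {U V} ψ := biproduct.desc fun φ => biproduct.ι (fun _ : S ⟶ V => X) (φ ≫ ψ)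
  map_id U := by
    apply biproduct.hom_ext'
    intro φ
    simp
  map_comp {U V W} ψ χ := by
    apply biproduct.hom_ext'
    intro φ
    simp

/-- The morphism of copower FI-modules induced by `u : X ⟶ Y`. -/
noncomputable def copowMap {X Y : ModR R} (u : X ⟶ Y) (S : FI) :
    copow R X S ⟶ copow R Y S where
  app U := biproduct.map fun _ : S ⟶ U => u
  naturality U V ψ := by
    apply biproduct.hom_ext'
    intro φ
    simp [copow]

@[simp] lemma copowMap_app {X Y : ModR R} (u : X ⟶ Y) (S U : FI) :
    (copowMap R u S).app U = biproduct.map fun _ : S ⟶ U => u := rfl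

/-- The adjunction map `Hom(X, 𝓛(S)) → Hom(copow X S, 𝓛)`. -/
noncomputable def toCopowHom (𝓛 : FIMod R) {X : ModR R} {S : FI} (g : X ⟶ 𝓛.obj S) :
    copow R X S ⟶ 𝓛 where
  app U := biproduct.desc fun φ : S ⟶ U => g ≫ 𝓛.map φ
  naturality U V ψ := by
    apply biproduct.hom_ext'
    intro φ
    simp [copow]

/-- The adjunction map `Hom(copow X S, 𝓛) → Hom(X, 𝓛(S))`. -/
noncomputable def ofCopowHom (𝓛 : FIMod R) {X : ModR R} {S : FI} (η : copow R X S ⟶ 𝓛) :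
    X ⟶ 𝓛.obj S :=
  biproduct.ι (fun _ : S ⟶ S => X) (𝟙 S) ≫ η.app S

lemma ofCopowHom_toCopowHom (𝓛 : FIMod R) {X : ModR R} {S : FI} (g : X ⟶ 𝓛.obj S) :
    ofCopowHom R 𝓛 (toCopowHom R 𝓛 g) = g := by
  simp [ofCopowHom, toCopowHom]

lemma toCopowHom_ofCopowHom (𝓛 : FIMod R) {X : ModR R} {S : FI} (η : copow R X S ⟶ 𝓛) :
    toCopowHom R 𝓛 (ofCopowHom R 𝓛 η) = η := by
  apply NatTrans.ext
  funext U
  apply biproduct.hom_ext'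
  intro φ
  have hnat : biproduct.ι (fun _ : S ⟶ S => X) (𝟙 S) ≫ η.app S ≫ 𝓛.map φ
      = biproduct.ι (fun _ : S ⟶ U => X) φ ≫ η.app U := by
    have hn := η.naturality φ
    have e1 : biproduct.ι (fun _ : S ⟶ S => X) (𝟙 S) ≫ (copow R X S).map φ
        = biproduct.ι (fun _ : S ⟶ U => X) φ := by simp [copow]
    calc _ = biproduct.ι (fun _ : S ⟶ S => X) (𝟙 S) ≫ (copow R X S).map φ ≫ η.app U := by
          exact (congrArg (fun t => biproduct.ι (fun _ : S ⟶ S => X) (𝟙 S) ≫ t) hn).symm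
      _ = _ := (Category.assoc _ _ _).symm.trans (congrArg (fun t => t ≫ η.app U) e1)
  simp only [toCopowHom, biproduct.ι_desc, ofCopowHom, Category.assoc]
  exact hnat

/-- The adjunction equivalence `Hom(X, 𝓛(S)) ≃ Hom(copow X S, 𝓛)`. -/
noncomputable def copowEquiv (𝓛 : FIMod R) (X : ModR R) (S : FI) :
    (X ⟶ 𝓛.obj S) ≃ (copow R X S ⟶ 𝓛) :=
  ⟨toCopowHom R 𝓛, ofCopowHom R 𝓛, ofCopowHom_toCopowHom R 𝓛, toCopowHom_ofCopowHom R 𝓛⟩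


/-- Let `Mod-R` be locally noetherian and `(T, F)` a hereditary torsion
theory on `Mod-R`.  An `FI`-module `𝓛` over `R` is closed with respect to the Serre
subcategory `T̂⁰ = {𝒱 ∈ FI_R : 𝒱_n ∈ T for all n ≥ 0}` if and only if `𝓛(S)` is a `T`-closed
object of `Mod-R` for every finite set `S`. -/
theorem statement18
    (_hln : ∃ G : Set (ModR R), ObjectProperty.IsSeparating (fun X => X ∈ G) ∧ ∀ X ∈ G, IsNoetherianObject X)
    (T F : ModR R → Prop)
    (_hhom : ∀ (X Y : ModR R), T X → F Y → ∀ f : X ⟶ Y, f = 0)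
    (_hses : ∀ X : ModR R, ∃ s : Subobject X, T (s : ModR R) ∧ F (cokernel s.arrow))
    (_hhered : ∀ {X Y : ModR R} (f : X ⟶ Y), Mono f → T Y → T X)
    (𝓛 : FIMod R) :
    IsCClosed (fun 𝒱 : FIMod R => ∀ n : ℕ, T (𝒱.obj (FI.of n))) 𝓛 ↔
      ∀ S : FI, IsCClosed T (𝓛.obj S) := by
  constructor
  · intro h S
    intro X Y u hu
    set c := copowMap R u S with hc
    have hciso : IsCIso (fun 𝒱 : FIMod R => ∀ n : ℕ, T (𝒱.obj (FI.of n))) c := by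
      constructor
      · intro n
        have hT : T (kernel (((evaluation FI (ModR R)).obj (FI.of n)).map c)) :=
          T_ker_biproductMap R _hhom _hses _hhered u hu.1 (S ⟶ FI.of n)
        exact _hhered (PreservesKernel.iso ((evaluation FI (ModR R)).obj (FI.of n)) c).hom
          inferInstance hT
      · intro n
        have hT : T (cokernel (((evaluation FI (ModR R)).obj (FI.of n)).map c)) :=
          T_coker_biproductMap R _hhom _hses _hhered u hu.2 (S ⟶ FI.of n)
        exact _hhered (PreservesCokernel.iso ((evaluation FI (ModR R)).obj (FI.of n)) c).hom
          inferInstance hT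
    have hb := h c hciso
    have key : (fun g : Y ⟶ 𝓛.obj S => u ≫ g)
        = ⇑(copowEquiv R 𝓛 X S).symm ∘ (fun η : copow R Y S ⟶ 𝓛 => c ≫ η)
            ∘ ⇑(copowEquiv R 𝓛 Y S) := by
      funext g
      show u ≫ g = ofCopowHom R 𝓛 (c ≫ toCopowHom R 𝓛 g)
      simp [ofCopowHom, toCopowHom, hc, biproduct.ι_map_assoc]
      erw [biproduct.ι_map_assoc, biproduct.ι_desc]
      simp
    rw [key]
    exact ((copowEquiv R 𝓛 X S).symm.bijective.comp (hb.comp (copowEquiv R 𝓛 Y S).bijective))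
  · intro h X Y u hu
    have hiso : ∀ S : FI, IsCIso T (u.app S) := by
      intro S
      refine ⟨?_, ?_⟩
      · have h1 : T ((kernel u).obj S) :=
          T_of_iso R _hhered ((kernel u).mapIso (FI.isoOf S)) (hu.1 _)
        exact _hhered (PreservesKernel.iso ((evaluation FI (ModR R)).obj S) u).inv
          inferInstance h1
      · have h1 : T ((cokernel u).obj S) :=
          T_of_iso R _hhered ((cokernel u).mapIso (FI.isoOf S)) (hu.2 _)
        exact _hhered (PreservesCokernel.iso ((evaluation FI (ModR R)).obj S) u).inv
          inferInstance h1
    have hb : ∀ S S' : FI, Function.Bijective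
        (fun g : Y.obj S ⟶ 𝓛.obj S' => u.app S ≫ g) :=
      fun S S' => h S' (u.app S) (hiso S)
    constructor
    · intro g g' hgg
      apply NatTrans.ext
      funext S
      have h2 : u.app S ≫ g.app S = u.app S ≫ g'.app S := by
        have := congrArg (fun η : X ⟶ 𝓛 => η.app S) hgg
        simpa using this
      exact (hb S S).injective h2
    · intro f
      have hval : ∀ S : FI,
          u.app S ≫ Function.surjInv (hb S S).surjective (f.app S) = f.app S :=
        fun S => Function.surjInv_eq (hb S S).surjective (f.app S)
      refine ⟨⟨fun S => Function.surjInv (hb S S).surjective (f.app S), ?_⟩, ?_⟩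
      · intro S S' ψ
        have lhs : u.app S ≫ Y.map ψ ≫ Function.surjInv (hb S' S').surjective (f.app S')
            = X.map ψ ≫ f.app S' := by
          rw [← Category.assoc, ← u.naturality ψ, Category.assoc, hval S']
        have rhs : u.app S ≫ Function.surjInv (hb S S).surjective (f.app S) ≫ 𝓛.map ψ
            = X.map ψ ≫ f.app S' := by
          rw [← Category.assoc, hval S]
          exact (f.naturality ψ).symm
        have key := (hb S S').injective (lhs.trans rhs.symm)
        exact key
      · apply NatTrans.ext
        funext S
        exact hval S
end
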